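/- For any n ≥ 0, A(2^n, 2) = 2^n − 1. -/

import Mathlib

open Finset

/-- ℓ1 (Hamming) weight of a `q`-ary vector of length `n`. -/
def hw {n q : ℕ} (x : Fin n → Fin q) : ℕ := ∑ k, (x k : ℕ)

/-- `E_q(n,i)`: the set of `q`-ary vectors of length `n` and weight `i`. -/
def lev (q n i : ℕ) : Finset (Fin n → Fin q) := Finset.univ.filter (fun x => hw x = i)

/-- Coordinatewise domination `x ≤ y`. -/
def domLe {n q : ℕ} (x y : Fin n → Fin q) : Prop := ∀ k, (x k : ℕ) ≤ (y k : ℕ)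

instance {n q : ℕ} (x y : Fin n → Fin q) : Decidable (domLe x y) :=
  inferInstanceAs (Decidable (∀ k, (x k : ℕ) ≤ (y k : ℕ)))

/-- `Y` covers `E_q(n,i-1)`: every vector of weight `i-1` is dominated by some `y ∈ Y`. -/
def Covers (q n i : ℕ) (Y : Finset (Fin n → Fin q)) : Prop :=
  ∀ x ∈ lev q n (i - 1), ∃ y ∈ Y, domLe x y

/-- A codeword class at level `i`: a subset of `E_q(n,i)` covering `E_q(n,i-1)`. -/
def IsClass (q n i : ℕ) (Y : Finset (Fin n → Fin q)) : Prop :=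
  Y ⊆ lev q n i ∧ Covers q n i Y

/-- `A_q(n,i)`: the maximum number of pairwise disjoint codeword classes in `E_q(n,i)`. -/
noncomputable def A (q n i : ℕ) : ℕ :=
  sSup {m | ∃ 𝒴 : Finset (Finset (Fin n → Fin q)),
    (∀ Y ∈ 𝒴, IsClass q n i Y) ∧
    (𝒴 : Set (Finset (Fin n → Fin q))).Pairwise Disjoint ∧ 𝒴.card = m}

section Aux

variable {N : ℕ}

/-- Characteristic vector of a set of coordinates. -/
def chi (s : Finset (Fin N)) : Fin N → Fin 2 := fun k => if k ∈ s then 1 else 0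

lemma chi_eq_one_iff {s : Finset (Fin N)} {k : Fin N} : chi s k = 1 ↔ k ∈ s := by
  unfold chi; split <;> simp_all

lemma fin2_val (a : Fin 2) : (a : ℕ) = if a = 1 then 1 else 0 := by
  fin_cases a <;> simp

lemma hw_eq_card (y : Fin N → Fin 2) :
    hw y = (Finset.univ.filter (fun k => y k = 1)).card := by
  unfold hw
  rw [Finset.card_filter]
  exact Finset.sum_congr rfl (fun k _ => fin2_val (y k))

lemma eq_chi (y : Fin N → Fin 2) : y = chi (Finset.univ.filter (fun k => y k = 1)) := by
  funext k
  by_cases h : y k = 1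
  · rw [h]; symm; rw [chi_eq_one_iff]; simp [h]
  · have h0 : y k = 0 := by omega
    rw [h0]
    unfold chi
    simp [h]

lemma hw_chi (s : Finset (Fin N)) : hw (chi s) = s.card := by
  rw [hw_eq_card]
  congr 1
  ext k
  simp [chi_eq_one_iff]

lemma domLe_chi {s t : Finset (Fin N)} (h : s ⊆ t) : domLe (chi s) (chi t) := by
  intro k
  unfold chi
  split
  · next hk => simp [h hk]
  · simp

/-- Any weight-1 vector is `chi {a}` for some `a`. -/
lemma weight_one (x : Fin N → Fin 2) (hx : hw x = 1) : ∃ a : Fin N, x = chi {a} := by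
  rw [hw_eq_card] at hx
  obtain ⟨a, ha⟩ := Finset.card_eq_one.mp hx
  exact ⟨a, by rw [eq_chi x, ha]⟩

end Aux

section LowerBound

variable {n : ℕ}

/-- XOR on `Fin (2^n)`. -/
def fxor (a b : Fin (2 ^ n)) : Fin (2 ^ n) :=
  ⟨a.val ^^^ b.val, Nat.xor_lt_two_pow a.isLt b.isLt⟩

lemma fxor_ne {a g : Fin (2 ^ n)} (hg : g.val ≠ 0) : fxor a g ≠ a := by
  intro h
  apply hg
  have hv : a.val ^^^ g.val = a.val := congrArg Fin.val h
  calc g.val = a.val ^^^ (a.val ^^^ g.val) := (xor_cancel_left _ _).symm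
    _ = a.val ^^^ a.val := by rw [hv]
    _ = 0 := Nat.xor_self _

/-- The class associated to a nonzero `g`. -/
def Yg (g : Fin (2 ^ n)) : Finset (Fin (2 ^ n) → Fin 2) :=
  Finset.univ.image (fun x => chi {x, fxor x g})

lemma Yg_isClass {g : Fin (2 ^ n)} (hg : g.val ≠ 0) : IsClass 2 (2 ^ n) 2 (Yg g) := by
  constructor
  · intro y hy
    simp only [Yg, Finset.mem_image, Finset.mem_univ, true_and] at hy
    obtain ⟨x, rfl⟩ := hy
    simp only [lev, Finset.mem_filter, Finset.mem_univ, true_and]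
    rw [hw_chi, Finset.card_pair (fxor_ne hg).symm]
  · intro x hx
    simp only [lev, Finset.mem_filter, Finset.mem_univ, true_and] at hx
    obtain ⟨a, rfl⟩ := weight_one x hx
    refine ⟨chi {a, fxor a g}, ?_, ?_⟩
    · simp only [Yg, Finset.mem_image, Finset.mem_univ, true_and]
      exact ⟨a, rfl⟩
    · exact domLe_chi (by simp)

lemma chi_inj {s t : Finset (Fin N)} (h : chi s = chi t) : s = t := by
  ext k
  rw [← chi_eq_one_iff (s := s), ← chi_eq_one_iff (s := t), h]

lemma Yg_disjoint {g h : Fin (2 ^ n)} (hg : g.val ≠ 0) (hh : h.val ≠ 0) (hgh : g ≠ h) :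
    Disjoint (Yg g) (Yg h) := by
  rw [Finset.disjoint_left]
  intro y hy1 hy2
  simp only [Yg, Finset.mem_image, Finset.mem_univ, true_and] at hy1 hy2
  obtain ⟨x, rfl⟩ := hy1
  obtain ⟨z, hz⟩ := hy2
  have hsets : ({z, fxor z h} : Finset (Fin (2 ^ n))) = {x, fxor x g} := chi_inj hz
  apply hgh
  apply Fin.ext
  have hx1 : x ∈ ({z, fxor z h} : Finset (Fin (2 ^ n))) := by rw [hsets]; simp
  have hx2 : fxor x g ∈ ({z, fxor z h} : Finset (Fin (2 ^ n))) := by rw [hsets]; simp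
  simp only [Finset.mem_insert, Finset.mem_singleton] at hx1 hx2
  have e1 := fun (h' : x = z) => congrArg Fin.val h'
  -- work on values
  rcases hx1 with h1 | h1 <;> rcases hx2 with h2 | h2
  · exact absurd (h2.trans h1.symm) (fxor_ne hg)
  · have hv1 : x.val = z.val := congrArg Fin.val h1
    have hv2 : x.val ^^^ g.val = z.val ^^^ h.val := congrArg Fin.val h2
    rw [hv1] at hv2
    exact Nat.xor_right_injective hv2
  · -- x = z ^^^ h, x ^^^ g = z
    have hv1 : x.val = z.val ^^^ h.val := congrArg Fin.val h1
    have hv2 : x.val ^^^ g.val = z.val := congrArg Fin.val h2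
    have : z.val ^^^ h.val ^^^ g.val = z.val := by rw [← hv1]; exact hv2
    have hgh' : h.val ^^^ g.val = 0 := by
      have := Nat.xor_right_injective (x := z.val)
        (show z.val ^^^ (h.val ^^^ g.val) = z.val ^^^ 0 by
          rw [← Nat.xor_assoc]; simpa using this)
      exact this
    have := xor_eq_zero_iff.mp hgh'
    omega
  · have hv2 : x.val ^^^ g.val = z.val ^^^ h.val := congrArg Fin.val h2
    have hv1 : x.val = z.val ^^^ h.val := congrArg Fin.val h1
    rw [← hv1] at hv2
    have : g.val = 0 := by
      have := Nat.xor_right_injective (x := x.val)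
        (show x.val ^^^ g.val = x.val ^^^ 0 by simpa using hv2)
      exact this
    exact absurd this hg

end LowerBound

section UpperBound

/-- Every class contains, for each `j ≠ 0`, ... in fact: every class contains a vector
`chi {0, j}` for some `j ≠ 0`. -/
lemma class_contains {N : ℕ} (hN : 0 < N) {Y : Finset (Fin N → Fin 2)}
    (hY : IsClass 2 N 2 Y) :
    ∃ j : Fin N, j ≠ ⟨0, hN⟩ ∧ chi {⟨0, hN⟩, j} ∈ Y := by
  obtain ⟨hsub, hcov⟩ := hY
  have h0 : chi ({⟨0, hN⟩} : Finset (Fin N)) ∈ lev 2 N 1 := by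
    simp only [lev, Finset.mem_filter, Finset.mem_univ, true_and]
    rw [hw_chi]; simp
  obtain ⟨y, hyY, hdom⟩ := hcov _ h0
  have hy2 : hw y = 2 := by
    have := hsub hyY
    simpa [lev] using this
  -- y 0 = 1
  have hy0 : y ⟨0, hN⟩ = 1 := by
    have := hdom ⟨0, hN⟩
    have h1 : (chi ({⟨0, hN⟩} : Finset (Fin N)) ⟨0, hN⟩ : ℕ) = 1 := by
      rw [show chi ({⟨0, hN⟩} : Finset (Fin N)) ⟨0, hN⟩ = 1 from chi_eq_one_iff.mpr (by simp)]
      rfl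
    rw [h1] at this
    omega
  -- support of y is a pair {0, j}
  rw [hw_eq_card] at hy2
  obtain ⟨a, b, hab, hs⟩ := Finset.card_eq_two.mp hy2
  have h0mem : (⟨0, hN⟩ : Fin N) ∈ Finset.univ.filter (fun k => y k = 1) := by
    simp [hy0]
  rw [hs] at h0mem
  simp only [Finset.mem_insert, Finset.mem_singleton] at h0mem
  rcases h0mem with h0a | h0b
  · refine ⟨b, by rw [← h0a] at hab; exact fun h => hab h.symm, ?_⟩
    have : y = chi {⟨0, hN⟩, b} := by rw [eq_chi y, hs, h0a]
    rwa [← this]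
  · refine ⟨a, by rw [← h0b] at hab; exact fun h => hab h, ?_⟩
    have : y = chi {⟨0, hN⟩, a} := by
      rw [eq_chi y, hs, h0b, Finset.pair_comm]
    rwa [← this]

lemma upper_bound {N : ℕ} (hN : 0 < N) {m : ℕ}
    (hm : m ∈ {m | ∃ 𝒴 : Finset (Finset (Fin N → Fin 2)),
      (∀ Y ∈ 𝒴, IsClass 2 N 2 Y) ∧
      (𝒴 : Set (Finset (Fin N → Fin 2))).Pairwise Disjoint ∧ 𝒴.card = m}) :
    m ≤ N - 1 := by
  obtain ⟨𝒴, hclass, hdisj, hcard⟩ := hm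
  subst hcard
  classical
  have key : ∀ Y ∈ 𝒴, ∃ j : Fin N, j ≠ ⟨0, hN⟩ ∧ chi {⟨0, hN⟩, j} ∈ Y :=
    fun Y hY => class_contains hN (hclass Y hY)
  set f : Finset (Fin N → Fin 2) → Fin N := fun Y =>
    if h : ∃ j : Fin N, j ≠ ⟨0, hN⟩ ∧ chi {⟨0, hN⟩, j} ∈ Y then h.choose else ⟨0, hN⟩
    with hf
  have hfspec : ∀ Y ∈ 𝒴, f Y ≠ ⟨0, hN⟩ ∧ chi {⟨0, hN⟩, f Y} ∈ Y := by
    intro Y hY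
    have h := key Y hY
    rw [hf]
    simp only [h, dif_pos]
    exact h.choose_spec
  have hle : 𝒴.card ≤ (Finset.univ.erase (⟨0, hN⟩ : Fin N)).card := by
    apply Finset.card_le_card_of_injOn f
    · intro Y hY
      exact Finset.mem_erase.mpr ⟨(hfspec Y hY).1, Finset.mem_univ _⟩
    · intro Y1 hY1 Y2 hY2 heq
      by_contra hne
      have hd := hdisj hY1 hY2 hne
      have h1 := (hfspec Y1 hY1).2
      have h2 := (hfspec Y2 hY2).2
      rw [heq] at h1
      exact Finset.disjoint_left.mp hd h1 h2
  rwa [Finset.card_erase_of_mem (Finset.mem_univ _), Finset.card_univ, Fintype.card_fin] at hle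

end UpperBound

theorem stmt_7 (n : ℕ) : A 2 (2 ^ n) 2 = 2 ^ n - 1 := by
  classical
  have hN : 0 < 2 ^ n := Nat.pow_pos (by norm_num)
  set S := {m | ∃ 𝒴 : Finset (Finset (Fin (2 ^ n) → Fin 2)),
    (∀ Y ∈ 𝒴, IsClass 2 (2 ^ n) 2 Y) ∧
    (𝒴 : Set (Finset (Fin (2 ^ n) → Fin 2))).Pairwise Disjoint ∧ 𝒴.card = m} with hS
  have hub : ∀ m ∈ S, m ≤ 2 ^ n - 1 := fun m hm => upper_bound hN hm
  -- lower bound: membership of 2^n - 1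
  have hmem : (2 ^ n - 1) ∈ S := by
    refine ⟨(Finset.univ.filter (fun g : Fin (2 ^ n) => g.val ≠ 0)).image Yg, ?_, ?_, ?_⟩
    · intro Y hY
      simp only [Finset.mem_image, Finset.mem_filter, Finset.mem_univ, true_and] at hY
      obtain ⟨g, hg, rfl⟩ := hY
      exact Yg_isClass hg
    · intro Y1 hY1 Y2 hY2 hne
      simp only [Finset.coe_image, Set.mem_image, Finset.mem_coe, Finset.mem_filter,
        Finset.mem_univ, true_and] at hY1 hY2
      obtain ⟨g, hg, rfl⟩ := hY1
      obtain ⟨h, hh, rfl⟩ := hY2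
      exact Yg_disjoint hg hh (fun e => hne (by rw [e]))
    · rw [Finset.card_image_of_injOn]
      · have he : (Finset.univ.filter (fun g : Fin (2 ^ n) => g.val ≠ 0))
            = Finset.univ.erase (⟨0, hN⟩ : Fin (2 ^ n)) := by
          ext g
          simp only [Finset.mem_filter, Finset.mem_univ, true_and, Finset.mem_erase, and_true, ne_eq, Fin.ext_iff]
        rw [he, Finset.card_erase_of_mem (Finset.mem_univ _), Finset.card_univ, Fintype.card_fin]
      · intro g hg h hh heq
        simp only [Finset.mem_coe, Finset.mem_filter, Finset.mem_univ, true_and] at hg hh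
        by_contra hne
        have hd := Yg_disjoint hg hh hne
        rw [heq] at hd
        have hne' : (Yg h).Nonempty := by
          refine ⟨chi {⟨0, hN⟩, fxor ⟨0, hN⟩ h}, ?_⟩
          simp only [Yg, Finset.mem_image, Finset.mem_univ, true_and]
          exact ⟨_, rfl⟩
        rw [disjoint_self] at hd
        exact hne'.ne_empty (by simpa using hd)
  have hbdd : BddAbove S := ⟨2 ^ n - 1, hub⟩
  unfold A
  rw [← hS]
  exact le_antisymm (csSup_le ⟨_, hmem⟩ hub) (le_csSup hbdd hmem)
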